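/- For n > k > 0 with k even, T(n,k,k/2) = N(n,k), i.e., the number of k-element subsets of Z/nZ summing to k/2 modulo n equals the number of necklaces with k black beads and n−k white beads. -/

import Mathlib

open Pointwise

/-- `T n k s` is the number of `k`-element subsets of `ℤ/nℤ` whose sum of elements
is `s` modulo `n`. -/
noncomputable def T (n k : ℕ) (s : ℤ) : ℕ :=
  Nat.card {Q : Finset (ZMod n) // Q.card = k ∧ (∑ a ∈ Q, a) = (s : ZMod n)}

/-- `N n k` is the number of necklaces with `k` black beads and `n - k` white beads,
i.e., the number of orbits of `k`-element subsets of `ℤ/nℤ` under the translation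
action of `ℤ/nℤ`. -/
noncomputable def N (n k : ℕ) : ℕ :=
  Nat.card {C : Set (Finset (ZMod n)) //
    ∃ Q : Finset (ZMod n), Q.card = k ∧ C = AddAction.orbit (ZMod n) Q}

open Polynomial Finset

namespace Stmt12Aux

lemma prod_prim (m : ℕ) (hm : 0 < m) {μ : ℂ} (hμ : IsPrimitiveRoot μ m) :
    ∏ i ∈ Finset.range m, (X + C (μ ^ i)) = X ^ m - C ((-1 : ℂ) ^ m) := by
  have hroots : Polynomial.nthRoots m ((-1:ℂ)^m) = (Multiset.range m).map (fun i => μ ^ i * (-1)) :=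
    hμ.nthRoots_eq (by ring)
  have hmonic : (X ^ m - C ((-1:ℂ)^m)).Monic := monic_X_pow_sub_C _ hm.ne'
  have hdeg : (X ^ m - C ((-1:ℂ)^m)).natDegree = m := natDegree_X_pow_sub_C
  have hcard : Multiset.card (X ^ m - C ((-1:ℂ)^m)).roots = (X ^ m - C ((-1:ℂ)^m)).natDegree := by
    have h : (X ^ m - C ((-1:ℂ)^m)).roots = Polynomial.nthRoots m ((-1:ℂ)^m) := rfl
    rw [h, hroots, hdeg, Multiset.card_map, Multiset.card_range]
  have key := prod_multiset_X_sub_C_of_monic_of_roots_card_eq hmonic hcard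
  rw [← key]
  have h : (X ^ m - C ((-1:ℂ)^m)).roots = Polynomial.nthRoots m ((-1:ℂ)^m) := rfl
  rw [h, hroots, Multiset.map_map]
  have : ∀ i : ℕ, ((fun a => X - C a) ∘ fun i : ℕ => μ ^ i * (-1)) i = X + C (μ ^ i) := by
    intro i; simp [Function.comp, sub_neg_eq_add]
  rw [Multiset.map_congr rfl (fun i _ => this i)]
  rfl

/-- periodic block product -/
lemma prod_blocks (m q : ℕ) {μ : ℂ} (hμm : μ ^ m = 1) :
    ∏ i ∈ Finset.range (m * q), (X + C (μ ^ i)) = (∏ i ∈ Finset.range m, (X + C (μ ^ i))) ^ q := by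
  induction q with
  | zero => simp
  | succ q ih =>
      rw [Nat.mul_succ, Finset.prod_range_add, ih, pow_succ]
      congr 1
      apply Finset.prod_congr rfl
      intro i _
      congr 2
      rw [pow_add, pow_mul, hμm, one_pow, one_mul]

/-- coefficient extraction -/
lemma coeff_pow (m q t : ℕ) (hm : 0 < m) (ht : t ≤ m * q) (b : ℂ) :
    ((X ^ m + C b) ^ q).coeff t
      = if m ∣ t then b ^ (q - t / m) * (q.choose (t / m)) else 0 := by
  rw [add_pow]
  rw [finset_sum_coeff]
  have hterm : ∀ i ∈ Finset.range (q + 1),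
      ((X ^ m) ^ i * C b ^ (q - i) * (q.choose i : ℂ[X])).coeff t
        = if t = m * i then b ^ (q - i) * (q.choose i) else 0 := by
    intro i _
    rw [← pow_mul, ← C_pow, ← C_eq_natCast, mul_assoc, ← C_mul, mul_comm ((X : ℂ[X]) ^ (m * i)), coeff_C_mul,
      coeff_X_pow]
    split_ifs <;> simp
  rw [Finset.sum_congr rfl hterm]
  by_cases hdvd : m ∣ t
  · obtain ⟨c, rfl⟩ := hdvd
    have hc : m * c / m = c := by rw [Nat.mul_div_cancel_left _ hm]
    rw [if_pos ⟨c, rfl⟩, hc]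
    have : ∀ i ∈ Finset.range (q + 1),
        (if m * c = m * i then b ^ (q - i) * (q.choose i : ℂ) else 0)
          = if i = c then b ^ (q - i) * (q.choose i : ℂ) else 0 := by
      intro i _
      congr 1
      simp only [eq_iff_iff]
      constructor
      · intro h; exact (Nat.eq_of_mul_eq_mul_left hm h).symm
      · intro h; rw [h]
    rw [Finset.sum_congr rfl this, Finset.sum_ite_eq' (Finset.range (q+1)) c]
    have hcq : c ∈ Finset.range (q + 1) := by
      rw [Finset.mem_range, Nat.lt_succ_iff]
      exact Nat.le_of_mul_le_mul_left (by omega) hm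
    rw [if_pos hcq]
  · rw [if_neg hdvd]
    apply Finset.sum_eq_zero
    intro i _
    rw [if_neg]
    intro h
    exact hdvd ⟨i, h⟩

end Stmt12Aux


namespace Stmt12Aux2
open Stmt12Aux

lemma esymm_eval (n k : ℕ) [NeZero n] (hkn : k ≤ n) {μ : ℂ} (hμn : μ ^ n = 1) :
    ∑ Q ∈ Finset.powersetCard k (Finset.univ : Finset (ZMod n)), ∏ a ∈ Q, μ ^ a.val
      = if orderOf μ ∣ k then (-(-1:ℂ)^(orderOf μ))^(k / orderOf μ)
          * ((n / orderOf μ).choose (k / orderOf μ)) else 0 := by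
  have hn : 0 < n := Nat.pos_of_ne_zero (NeZero.ne n)
  have hcard : (Finset.univ : Finset (ZMod n)).card = n := by
    rw [Finset.card_univ, ZMod.card]
  have hfin : IsOfFinOrder μ := isOfFinOrder_iff_pow_eq_one.2 ⟨n, hn, hμn⟩
  set m := orderOf μ with hm
  have hμm : μ ^ m = 1 := pow_orderOf_eq_one μ
  have hmn : m ∣ n := orderOf_dvd_of_pow_eq_one hμn
  have hm0 : 0 < m := hfin.orderOf_pos
  have hμprim : IsPrimitiveRoot μ m := IsPrimitiveRoot.orderOf μ
  have h1 : ∑ Q ∈ Finset.powersetCard k (Finset.univ : Finset (ZMod n)), ∏ a ∈ Q, μ ^ a.val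
      = (∏ a : ZMod n, (X + C (μ ^ a.val))).coeff (n - k) := by
    rw [Finset.prod_X_add_C_coeff _ _ (show n - k ≤ _ by rw [hcard]; omega)]
    rw [show (Finset.univ : Finset (ZMod n)).card - (n - k) = k from by rw [hcard]; omega]
  rw [h1]
  have h2 : ∏ a : ZMod n, (X + C (μ ^ a.val)) = ∏ i ∈ Finset.range n, (X + C (μ ^ i)) := by
    refine Finset.prod_nbij' (fun a => a.val) (fun i => (i : ZMod n)) ?_ ?_ ?_ ?_ ?_
    · intro a _; exact Finset.mem_range.2 (ZMod.val_lt a)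
    · intro i _; exact Finset.mem_univ _
    · intro a _; exact ZMod.natCast_rightInverse a
    · intro i hi; exact ZMod.val_cast_of_lt (Finset.mem_range.1 hi)
    · intro a _; rfl
  rw [h2]
  have hnm : n = m * (n / m) := (Nat.mul_div_cancel' hmn).symm
  rw [show Finset.range n = Finset.range (m * (n/m)) from by rw [← hnm]]
  rw [prod_blocks m (n/m) hμm, prod_prim m hm0 hμprim]
  have h3 : (X : ℂ[X]) ^ m - C ((-1:ℂ)^m) = X ^ m + C (-(-1:ℂ)^m) := by
    rw [map_neg, sub_eq_add_neg]
  rw [h3, coeff_pow m (n/m) (n - k) hm0 (by omega) _]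
  have hdvd_iff : m ∣ n - k ↔ m ∣ k := by
    constructor
    · intro h
      have h2 : k = n - (n - k) := by omega
      rw [h2]; exact Nat.dvd_sub hmn h
    · intro h
      exact Nat.dvd_sub hmn h
  by_cases hdk : m ∣ k
  · rw [if_pos (hdvd_iff.2 hdk), if_pos hdk]
    obtain ⟨b, rfl⟩ := hdk
    have hab : b ≤ n / m := by
      have h4 : m * (n / m) = n := Nat.mul_div_cancel' hmn
      exact Nat.le_of_mul_le_mul_left (by omega) hm0
    have e0 : n - m * b = m * (n / m - b) := by
      rw [Nat.mul_sub, Nat.mul_div_cancel' hmn]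
    have e1 : (n - m * b) / m = n / m - b := by
      rw [e0, Nat.mul_div_cancel_left _ hm0]
    rw [e1]
    have e2 : m * b / m = b := by rw [Nat.mul_div_cancel_left _ hm0]
    rw [e2, Nat.sub_sub_self hab, Nat.choose_symm hab]
  · rw [if_neg (fun h => hdk (hdvd_iff.1 h)), if_neg hdk]
end Stmt12Aux2

namespace Stmt12Aux3
open Stmt12Aux Stmt12Aux2

def cval (n k m : ℕ) : ℕ := if m ∣ k then (n / m).choose (k / m) else 0

variable {n : ℕ} [NeZero n] {μ : ℂ}

lemma pow_val_mod (hμn : μ ^ n = 1) (a : ℕ) : μ ^ (a % n) = μ ^ a := by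
  conv_rhs => rw [← Nat.div_add_mod a n]
  rw [pow_add, pow_mul, hμn, one_pow, one_mul]

lemma pow_val_add (hμn : μ ^ n = 1) (x y : ZMod n) :
    μ ^ (x + y).val = μ ^ x.val * μ ^ y.val := by
  rw [ZMod.val_add, pow_val_mod hμn, pow_add]

lemma pow_val_sum (hμn : μ ^ n = 1) (Q : Finset (ZMod n)) :
    μ ^ (∑ a ∈ Q, a).val = ∏ a ∈ Q, μ ^ a.val := by
  classical
  induction Q using Finset.induction with
  | empty => simp [ZMod.val_zero]
  | insert _ _ hx ih =>
      rw [Finset.sum_insert hx, Finset.prod_insert hx, pow_val_add hμn, ih]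

lemma ortho {ζ : ℂ} (hζ : IsPrimitiveRoot ζ n) (x : ZMod n) :
    ∑ j ∈ Finset.range n, ζ ^ (j * x.val) = if x = 0 then (n : ℂ) else 0 := by
  have hn : 0 < n := Nat.pos_of_ne_zero (NeZero.ne n)
  by_cases hx : x = 0
  · subst hx
    simp [ZMod.val_zero]
  · rw [if_neg hx]
    have hvpos : 0 < x.val := by
      rcases Nat.eq_zero_or_pos x.val with h | h
      · exact absurd ((ZMod.val_eq_zero x).1 h) hx
      · exact h
    have hw : ζ ^ x.val ≠ 1 := hζ.pow_ne_one_of_pos_of_lt hvpos.ne' (ZMod.val_lt x)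
    have hwn : (ζ ^ x.val) ^ n = 1 := by
      rw [← pow_mul, mul_comm, pow_mul, hζ.pow_eq_one, one_pow]
    have := geom_sum_mul (ζ ^ x.val) n
    rw [hwn, sub_self] at this
    have h2 : ∑ i ∈ Finset.range n, (ζ ^ x.val) ^ i = 0 := by
      rcases mul_eq_zero.1 this with h | h
      · exact h
      · exact absurd (sub_eq_zero.1 h) hw
    rw [← h2]
    apply Finset.sum_congr rfl
    intro j _
    rw [mul_comm, pow_mul]

lemma mu_half (k : ℕ) (heven : Even k) (hμn : μ ^ n = 1)
    (hdk : orderOf μ ∣ k) (hfin : IsOfFinOrder μ) :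
    μ ^ (k / 2) = (-(-1:ℂ) ^ orderOf μ) ^ (k / orderOf μ) := by
  set m := orderOf μ with hm
  have hm0 : 0 < m := hfin.orderOf_pos
  have hμm : μ ^ m = 1 := pow_orderOf_eq_one μ
  obtain ⟨u, rfl⟩ := hdk
  have hu : m * u / m = u := Nat.mul_div_cancel_left _ hm0
  rw [hu]
  rcases Nat.even_or_odd u with hue | huo
  · obtain ⟨v, rfl⟩ := hue
    have h2 : m * (v + v) / 2 = m * v := by
      rw [show m * (v + v) = (m * v) * 2 by ring, Nat.mul_div_cancel _ two_pos]
    rw [h2, pow_mul, hμm, one_pow]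
    have : (-(-1:ℂ) ^ m) ^ (v + v) = ((-(-1:ℂ) ^ m) ^ 2) ^ v := by
      rw [← pow_mul]; congr 1; omega
    rw [this]
    have h3 : (-(-1:ℂ) ^ m) ^ 2 = 1 := by
      rw [neg_sq, ← pow_mul, mul_comm m 2, pow_mul]
      norm_num
    rw [h3, one_pow]
  · -- u odd, so m even
    have hme : Even m := by
      rcases Nat.even_or_odd m with h | h
      · exact h
      · exact absurd (Nat.odd_mul.2 ⟨h, huo⟩) (Nat.not_odd_iff_even.2 heven)
    obtain ⟨w, hw⟩ := id hme
    have hw0 : 0 < w := by omega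
    have hwm : w < m := by omega
    have hμw : μ ^ w = -1 := by
      have hsq : μ ^ w * μ ^ w = 1 := by
        rw [← pow_add, ← hw] ; exact hμm
      rcases mul_self_eq_one_iff.1 hsq with h | h
      · exfalso
        have := orderOf_dvd_of_pow_eq_one h
        rw [← hm] at this
        exact absurd (Nat.le_of_dvd hw0 this) (by omega)
      · exact h
    have h2 : m * u / 2 = w * u := by
      rw [show m * u = (w * u) * 2 by rw [hw]; ring, Nat.mul_div_cancel _ two_pos]
    rw [h2, pow_mul, hμw]
    have h3 : (-1:ℂ) ^ m = 1 := hme.neg_one_pow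
    rw [h3]
end Stmt12Aux3

namespace Stmt12Aux4
open Stmt12Aux Stmt12Aux2 Stmt12Aux3

lemma term_eval (n k : ℕ) [NeZero n] (hk : 0 < k) (hkn : k < n) (heven : Even k)
    {μ : ℂ} (hμn : μ ^ n = 1) :
    μ ^ (-((k / 2 : ℕ) : ZMod n)).val *
      ∑ Q ∈ Finset.powersetCard k (Finset.univ : Finset (ZMod n)), ∏ a ∈ Q, μ ^ a.val
      = (cval n k (orderOf μ) : ℂ) := by
  have hn : 0 < n := Nat.pos_of_ne_zero (NeZero.ne n)
  have hfin : IsOfFinOrder μ := isOfFinOrder_iff_pow_eq_one.2 ⟨n, hn, hμn⟩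
  rw [esymm_eval n k (le_of_lt hkn) hμn]
  set m := orderOf μ with hm
  by_cases hdk : m ∣ k
  · rw [if_pos hdk, cval, if_pos hdk]
    rw [← mu_half k heven hμn hdk hfin]
    have hs : (((k / 2 : ℕ) : ZMod n)).val = k / 2 := ZMod.val_cast_of_lt (by omega)
    have key : μ ^ (-((k / 2 : ℕ) : ZMod n)).val * μ ^ (((k / 2 : ℕ) : ZMod n)).val = 1 := by
      rw [← pow_val_add hμn, neg_add_cancel, ZMod.val_zero, pow_zero]
    rw [hs] at key
    push_cast
    rw [← mul_assoc, key, one_mul]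
  · rw [if_neg hdk, cval, if_neg hdk]
    simp

lemma T_card (n k : ℕ) [NeZero n] (s : ℤ) :
    T n k s = (Finset.univ.filter fun Q : Finset (ZMod n) =>
      Q.card = k ∧ (∑ a ∈ Q, a) = (s : ZMod n)).card := by
  rw [T, Nat.card_eq_fintype_card, Fintype.card_subtype]

lemma T_complex (n k : ℕ) [NeZero n] (hk : 0 < k) (hkn : k < n) (heven : Even k) :
    (T n k ((k / 2 : ℕ) : ℤ) : ℂ) * n
      = ∑ j ∈ Finset.range n, (cval n k (n / Nat.gcd n j) : ℂ) := by
  classical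
  have hn : 0 < n := Nat.pos_of_ne_zero (NeZero.ne n)
  obtain ⟨ζ, hζ⟩ : ∃ ζ : ℂ, IsPrimitiveRoot ζ n :=
    ⟨Complex.exp (2 * Real.pi * Complex.I / n), Complex.isPrimitiveRoot_exp n (NeZero.ne n)⟩
  have hζn : ζ ^ n = 1 := hζ.pow_eq_one
  set s : ZMod n := ((k / 2 : ℕ) : ZMod n) with hsdef
  have hcast : (((k / 2 : ℕ) : ℤ) : ZMod n) = s := Int.cast_natCast _
  rw [T_card, hcast]
  set Sk := Finset.univ.filter (fun Q : Finset (ZMod n) => Q.card = k) with hSk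
  -- step 1: count via indicator
  have hiff : ∀ Q : Finset (ZMod n), ((∑ a ∈ Q, a) + (-s) = 0) ↔ ((∑ a ∈ Q, a) = s) := by
    intro Q; rw [add_neg_eq_zero]
  have step1 : ((Finset.univ.filter fun Q : Finset (ZMod n) =>
        Q.card = k ∧ (∑ a ∈ Q, a) = s).card : ℂ) * n
      = ∑ Q ∈ Sk, (if ((∑ a ∈ Q, a) + (-s)) = 0 then (n : ℂ) else 0) := by
    have e1 : ∑ Q ∈ Sk, (if ((∑ a ∈ Q, a) + (-s)) = 0 then (n : ℂ) else 0)
        = ∑ Q ∈ Sk.filter (fun Q => ((∑ a ∈ Q, a) + (-s)) = 0), (n : ℂ) :=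
      (Finset.sum_filter _ _).symm
    rw [e1, Finset.sum_const, nsmul_eq_mul, hSk, Finset.filter_filter]
    congr 2
    congr 1
    apply Finset.filter_congr
    intro Q _
    exact and_congr_right fun _ => (hiff Q).symm
  rw [step1]
  -- step 2: orthogonality
  have step2 : ∀ Q : Finset (ZMod n),
      (if ((∑ a ∈ Q, a) + (-s)) = 0 then (n : ℂ) else 0)
        = ∑ j ∈ Finset.range n, ζ ^ (j * ((∑ a ∈ Q, a) + (-s)).val) :=
    fun Q => (ortho hζ _).symm
  rw [Finset.sum_congr rfl (fun Q _ => step2 Q), Finset.sum_comm]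
  -- step 3: per-j evaluation
  apply Finset.sum_congr rfl
  intro j _
  have hμn : (ζ ^ j) ^ n = 1 := by rw [← pow_mul, mul_comm, pow_mul, hζn, one_pow]
  have hfinζ : IsOfFinOrder ζ := isOfFinOrder_iff_pow_eq_one.2 ⟨n, hn, hζn⟩
  have hord : orderOf (ζ ^ j) = n / Nat.gcd n j := by
    rw [hfinζ.orderOf_pow, ← hζ.eq_orderOf]
  have e3 : ∀ Q ∈ Sk, ζ ^ (j * ((∑ a ∈ Q, a) + (-s)).val)
      = (∏ a ∈ Q, (ζ ^ j) ^ a.val) * (ζ ^ j) ^ (-s).val := by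
    intro Q _
    rw [pow_mul, pow_val_add hμn, pow_val_sum hμn]
  rw [Finset.sum_congr rfl e3, ← Finset.sum_mul, mul_comm]
  have e4 : Sk = Finset.powersetCard k (Finset.univ : Finset (ZMod n)) := by
    rw [hSk, Finset.powersetCard_eq_filter, Finset.powerset_univ]
  rw [e4, hsdef]
  rw [term_eval n k hk hkn heven hμn, hord]
end Stmt12Aux4

namespace Stmt12Aux5
open Stmt12Aux3

lemma nat_card_finsets (α : Type*) [Finite α] (j : ℕ) :
    Nat.card {s : Finset α // s.card = j} = (Nat.card α).choose j := by
  cases nonempty_fintype α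
  classical
  rw [Nat.card_eq_fintype_card, Fintype.card_finset_len, Nat.card_eq_fintype_card]

variable {n k : ℕ} [NeZero n]

lemma fixed_count (k : ℕ) (t : ZMod n) :
    Nat.card {Q : Finset (ZMod n) // Q.card = k ∧ t +ᵥ Q = Q} = cval n k (addOrderOf t) := by
  classical
  have hn : 0 < n := Nat.pos_of_ne_zero (NeZero.ne n)
  set H := AddSubgroup.zmultiples t with hH
  set m := addOrderOf t with hmdef
  have hmcard : Nat.card H = m := Nat.card_zmultiples t
  have hm0 : 0 < m := addOrderOf_pos t
  have hmn : m ∣ n := by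
    have h : addOrderOf t ∣ Fintype.card (ZMod n) := addOrderOf_dvd_card
    rwa [ZMod.card] at h
  set π : ZMod n → ZMod n ⧸ H := QuotientAddGroup.mk with hπ
  have hπsurj : Function.Surjective π := Quotient.exists_rep
  have hπvadd : ∀ x : ZMod n, π (t + x) = π x := by
    intro x
    simp only [hπ, QuotientAddGroup.eq]
    have : -(t + x) + x = -t := by abel
    rw [this]
    exact neg_mem (AddSubgroup.mem_zmultiples t)
  -- fibers have cardinality m
  have hfiber : ∀ y : ZMod n ⧸ H, (Finset.univ.filter (fun x => π x = y)).card = m := by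
    intro y
    obtain ⟨y₀, rfl⟩ := hπsurj y
    have e : {x : ZMod n // π x = π y₀} ≃ H := by
      refine ⟨fun x => ⟨x.1 - y₀, ?_⟩, fun h => ⟨h.1 + y₀, ?_⟩, ?_, ?_⟩
      · have := x.2
        simp only [hπ, QuotientAddGroup.eq] at this
        have h2 : x.1 - y₀ = -(-x.1 + y₀) := by abel
        rw [h2]
        exact neg_mem this
      · simp only [hπ, QuotientAddGroup.eq]
        have h2 : -(h.1 + y₀) + y₀ = -h.1 := by abel
        rw [h2]
        exact neg_mem h.2
      · intro x; apply Subtype.ext; simp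
      · intro h; apply Subtype.ext; simp
    rw [← Fintype.card_subtype, ← Nat.card_eq_fintype_card, Nat.card_congr e, hmcard]
  -- quotient cardinality
  have hquot : Nat.card (ZMod n ⧸ H) = n / m := by
    have h1 : Nat.card (ZMod n) = Nat.card (ZMod n ⧸ H) * Nat.card H :=
      AddSubgroup.card_eq_card_quotient_mul_card_addSubgroup H
    rw [Nat.card_zmod, hmcard] at h1
    exact (Nat.div_eq_of_eq_mul_left hm0 h1).symm
  -- preimage cardinality
  have hpre : ∀ Q' : Finset (ZMod n ⧸ H),
      (Finset.univ.filter (fun x => π x ∈ Q')).card = Q'.card * m := by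
    intro Q'
    rw [Finset.card_eq_sum_card_fiberwise (f := π) (s := Finset.univ.filter (fun x => π x ∈ Q')) (t := Q')
      (fun x hx => (Finset.mem_filter.1 (Finset.mem_coe.1 hx)).2)]
    rw [Finset.sum_congr rfl (fun y hy => ?_), Finset.sum_const, smul_eq_mul]
    rw [Finset.filter_filter]
    rw [show (Finset.univ.filter fun x => π x ∈ Q' ∧ π x = y)
        = Finset.univ.filter fun x => π x = y from
      Finset.filter_congr fun x _ => ⟨fun h => h.2, fun h => ⟨h ▸ hy, h⟩⟩]
    exact hfiber y
  -- fixed Q are preimages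
  have hfix : ∀ Q : Finset (ZMod n), t +ᵥ Q = Q →
      Q = Finset.univ.filter (fun x => π x ∈ Q.image π) := by
    intro Q hQ
    have hstab : ∀ g ∈ H, ∀ a ∈ Q, g + a ∈ Q := by
      intro g hg a ha
      have hgQ : g +ᵥ Q = Q := by
        have h1 : t ∈ AddAction.stabilizer (ZMod n) Q := hQ
        have h2 : H ≤ AddAction.stabilizer (ZMod n) Q := AddSubgroup.zmultiples_le.2 h1
        exact h2 hg
      rw [← hgQ]
      exact Finset.mem_vadd_finset.2 ⟨a, ha, rfl⟩
    ext b
    simp only [Finset.mem_filter, Finset.mem_univ, true_and, Finset.mem_image]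
    constructor
    · intro hb; exact ⟨b, hb, rfl⟩
    · rintro ⟨a, ha, hab⟩
      simp only [hπ, QuotientAddGroup.eq] at hab
      have h2 : (-a + b) + a = b := by abel
      rw [← h2]
      exact hstab _ hab a ha
  by_cases hdk : m ∣ k
  · -- equiv with finsets of the quotient
    obtain ⟨b, rfl⟩ := hdk
    have E : {Q : Finset (ZMod n) // Q.card = m * b ∧ t +ᵥ Q = Q}
        ≃ {Q' : Finset (ZMod n ⧸ H) // Q'.card = b} := by
      refine ⟨fun Q => ⟨Q.1.image π, ?_⟩,
              fun Q' => ⟨Finset.univ.filter (fun x => π x ∈ Q'.1), ?_, ?_⟩, ?_, ?_⟩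
      · -- card of image
        have h1 := hpre (Q.1.image π)
        rw [← hfix Q.1 Q.2.2] at h1
        have h2 : (Q.1.image π).card * m = m * b := by rw [← h1, Q.2.1]
        exact Nat.eq_of_mul_eq_mul_left hm0 (by rw [mul_comm m]; exact h2)
      · rw [hpre, Q'.2]; ring
      · -- fixedness of the preimage
        ext x
        rw [Finset.mem_vadd_finset]
        simp only [Finset.mem_filter, Finset.mem_univ, true_and]
        constructor
        · rintro ⟨y, hy, rfl⟩
          have h3 : t +ᵥ y = t + y := rfl
          rw [h3, hπvadd]
          exact hy
        · intro hx
          refine ⟨x - t, ?_, by simp only [vadd_eq_add]; abel⟩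
          have : π (x - t) = π x := by
            rw [← hπvadd (x - t)]
            congr 1
            abel
          rwa [this]
      · intro Q
        apply Subtype.ext
        exact (hfix Q.1 Q.2.2).symm
      · intro Q'
        apply Subtype.ext
        ext y
        simp only [Finset.mem_image, Finset.mem_filter, Finset.mem_univ, true_and]
        constructor
        · rintro ⟨x, hx, rfl⟩; exact hx
        · intro hy
          obtain ⟨y₀, rfl⟩ := hπsurj y
          exact ⟨y₀, hy, rfl⟩
    rw [Nat.card_congr E, nat_card_finsets, hquot, cval, if_pos ⟨b, rfl⟩]
    rw [Nat.mul_div_cancel_left _ hm0]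
  · -- empty
    rw [cval, if_neg hdk]
    rw [Nat.card_eq_zero]
    left
    constructor
    intro Q
    apply hdk
    have h1 := hpre (Q.1.image π)
    rw [← hfix Q.1 Q.2.2, Q.2.1] at h1
    exact ⟨(Q.1.image π).card, h1.trans (mul_comm _ _)⟩

end Stmt12Aux5

namespace Stmt12Aux6
open Stmt12Aux3 Stmt12Aux5

variable {n k : ℕ} [NeZero n]

instance subAct (n k : ℕ) : AddAction (ZMod n) {Q : Finset (ZMod n) // Q.card = k} :=
  { vadd := fun t Q => ⟨t +ᵥ Q.1, by rw [Finset.card_vadd_finset]; exact Q.2⟩,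
    zero_vadd := fun Q => Subtype.ext (zero_vadd _ Q.1),
    add_vadd := fun a b Q => Subtype.ext (add_vadd a b Q.1) }

lemma N_mul (n k : ℕ) [NeZero n] :
    N n k * n = ∑ t : ZMod n, cval n k (addOrderOf t) := by
  classical
  set β := {Q : Finset (ZMod n) // Q.card = k} with hβ
  haveI : ∀ t : ZMod n, Fintype (AddAction.fixedBy β t) := fun t => Fintype.ofFinite _
  haveI : Fintype (Quotient (AddAction.orbitRel (ZMod n) β)) := Fintype.ofFinite _
  have burn := AddAction.sum_card_fixedBy_eq_card_orbits_mul_card_addGroup (ZMod n) β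
  have hv : ∀ (t : ZMod n) (Q : β), (t +ᵥ Q).1 = t +ᵥ Q.1 := fun _ _ => rfl
  -- identify fixed point counts
  have hfixcard : ∀ t : ZMod n,
      Fintype.card (AddAction.fixedBy β t) = cval n k (addOrderOf t) := by
    intro t
    rw [← Nat.card_eq_fintype_card]
    rw [← fixed_count (n := n) k t]
    apply Nat.card_congr
    refine ⟨fun Q => ⟨Q.1.1, Q.1.2, ?_⟩, fun Q => ⟨⟨Q.1, Q.2.1⟩, ?_⟩, ?_, ?_⟩
    · have h := Q.2
      simp only [AddAction.mem_fixedBy] at h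
      exact (hv t Q.1).symm.trans (congr_arg Subtype.val h)
    · simp only [AddAction.mem_fixedBy]
      exact Subtype.ext ((hv t ⟨Q.1, Q.2.1⟩).trans Q.2.2)
    · intro Q; rfl
    · intro Q; rfl
  -- identify orbit count with N
  have horb : Fintype.card (Quotient (AddAction.orbitRel (ZMod n) β)) = N n k := by
    rw [← Nat.card_eq_fintype_card, N]
    apply Nat.card_congr
    refine Equiv.ofBijective (f := Quotient.lift
      (fun Q : β => (⟨AddAction.orbit (ZMod n) Q.1, Q.1, Q.2, rfl⟩ :
        {C : Set (Finset (ZMod n)) //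
          ∃ Q : Finset (ZMod n), Q.card = k ∧ C = AddAction.orbit (ZMod n) Q})) ?_) ⟨?_, ?_⟩
    · rintro Q R ⟨t, ht⟩
      apply Subtype.ext
      show AddAction.orbit (ZMod n) Q.1 = AddAction.orbit (ZMod n) R.1
      apply AddAction.orbit_eq_iff.2
      exact ⟨t, (hv t R).symm.trans (congr_arg Subtype.val ht)⟩
    · intro x y
      induction x using Quotient.ind
      induction y using Quotient.ind
      rename_i Q R
      intro h
      apply Quotient.sound
      have h2 : AddAction.orbit (ZMod n) Q.1 = AddAction.orbit (ZMod n) R.1 :=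
        congr_arg Subtype.val h
      have h3 : Q.1 ∈ AddAction.orbit (ZMod n) R.1 := by
        rw [← h2]; exact AddAction.mem_orbit_self _
      obtain ⟨t, ht⟩ := h3
      exact ⟨t, Subtype.ext ((hv t R).trans ht)⟩
    · rintro ⟨C, Q, hQ, rfl⟩
      exact ⟨⟦⟨Q, hQ⟩⟧, rfl⟩
  rw [ZMod.card, horb] at burn
  rw [← burn]
  exact (Finset.sum_congr rfl fun t _ => hfixcard t)

end Stmt12Aux6

namespace Stmt12Aux7
open Stmt12Aux3 Stmt12Aux4 Stmt12Aux5 Stmt12Aux6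

lemma sum_reindex (n k : ℕ) [NeZero n] :
    ∑ j ∈ Finset.range n, cval n k (n / Nat.gcd n j) = ∑ t : ZMod n, cval n k (addOrderOf t) := by
  refine Finset.sum_nbij' (fun j => ((j : ℕ) : ZMod n)) (fun t => t.val) ?_ ?_ ?_ ?_ ?_
  · intro j _; exact Finset.mem_univ _
  · intro t _; exact Finset.mem_range.2 (ZMod.val_lt t)
  · intro j hj; exact ZMod.val_cast_of_lt (Finset.mem_range.1 hj)
  · intro t _; exact ZMod.natCast_rightInverse t
  · intro j _
    rw [ZMod.addOrderOf_coe j (NeZero.ne n)]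

lemma sum_div (n k : ℕ) [NeZero n] :
    ∑ t : ZMod n, cval n k (addOrderOf t) = ∑ d ∈ n.divisors, d.totient * cval n k d := by
  classical
  have hmaps : ∀ t : ZMod n, t ∈ Finset.univ → addOrderOf t ∈ n.divisors := by
    intro t _
    rw [Nat.mem_divisors]
    refine ⟨?_, NeZero.ne n⟩
    have h : addOrderOf t ∣ Fintype.card (ZMod n) := addOrderOf_dvd_card
    rwa [ZMod.card] at h
  rw [← Finset.sum_fiberwise_of_maps_to hmaps (fun t => cval n k (addOrderOf t))]
  apply Finset.sum_congr rfl
  intro d hd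
  have hin : ∀ t ∈ Finset.univ.filter (fun t : ZMod n => addOrderOf t = d),
      cval n k (addOrderOf t) = cval n k d := by
    intro t ht
    rw [(Finset.mem_filter.1 ht).2]
  rw [Finset.sum_congr rfl hin, Finset.sum_const, smul_eq_mul]
  congr 1
  have hdvd : d ∣ Fintype.card (ZMod n) := by
    rw [ZMod.card]; exact (Nat.mem_divisors.1 hd).1
  exact IsAddCyclic.card_addOrderOf_eq_totient hdvd

lemma final_div (n k : ℕ) (hn : n ≠ 0) :
    ∑ d ∈ n.divisors, d.totient * cval n k d
      = ∑ d ∈ (Nat.gcd n k).divisors, d.totient * ((n/d).choose (k/d)) := by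
  have e1 : ∀ d, d.totient * cval n k d
      = if d ∣ k then d.totient * ((n/d).choose (k/d)) else 0 := by
    intro d
    rw [cval]
    split_ifs <;> simp
  rw [Finset.sum_congr rfl (fun d _ => e1 d), ← Finset.sum_filter]
  apply Finset.sum_congr _ (fun _ _ => rfl)
  ext d
  simp only [Finset.mem_filter, Nat.mem_divisors]
  constructor
  · rintro ⟨⟨h1, _⟩, h2⟩
    refine ⟨Nat.dvd_gcd h1 h2, fun h => hn ?_⟩
    exact (Nat.gcd_eq_zero_iff.1 h).1
  · rintro ⟨h1, _⟩
    exact ⟨⟨h1.trans (Nat.gcd_dvd_left n k), hn⟩, h1.trans (Nat.gcd_dvd_right n k)⟩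
end Stmt12Aux7


open Stmt12Aux3 Stmt12Aux4 Stmt12Aux5 Stmt12Aux6 Stmt12Aux7 in
/-- For even `k`, `T(n,k,k/2) = N(n,k) = (1/n) ∑_{d ∣ gcd(n,k)} φ(d) C(n/d, k/d)`. -/
theorem stmt_12 (n k : ℕ) (hk : 0 < k) (hkn : k < n) (heven : Even k) :
    T n k (k / 2 : ℕ) = N n k ∧
    (T n k (k / 2 : ℕ) : ℤ) * n =
      ∑ d ∈ (Nat.gcd n k).divisors,
        (Nat.totient d : ℤ) * (Nat.choose (n / d) (k / d) : ℤ) := by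

  haveI : NeZero n := ⟨by omega⟩
  have hTnat : T n k ((k/2 : ℕ) : ℤ) * n
      = ∑ d ∈ (Nat.gcd n k).divisors, d.totient * ((n/d).choose (k/d)) := by
    have hC := T_complex n k hk hkn heven
    have hcasteq : ((T n k ((k/2:ℕ):ℤ) * n : ℕ) : ℂ)
        = ((∑ j ∈ Finset.range n, cval n k (n / Nat.gcd n j) : ℕ) : ℂ) := by
      push_cast
      exact hC
    have h2 := Nat.cast_injective (R := ℂ) hcasteq
    rw [h2, sum_reindex, Stmt12Aux7.sum_div, final_div n k (NeZero.ne n)]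
  have hNnat : N n k * n
      = ∑ d ∈ (Nat.gcd n k).divisors, d.totient * ((n/d).choose (k/d)) := by
    rw [N_mul, Stmt12Aux7.sum_div, final_div n k (NeZero.ne n)]
  constructor
  · exact Nat.eq_of_mul_eq_mul_right (by omega) (hTnat.trans hNnat.symm)
  · exact_mod_cast hTnat
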